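/- For all real x with 0 < x < 5, the following double inequality holds: (3 + x²/11)·sinh(x) / (2 + cosh(x) + x²/11) < x < (3 + x²/10)·sinh(x) / (2 + cosh(x) + x²/10). -/

import Mathlib

open Finset

lemma frame_sum_deriv (m : ℕ) (x : ℝ) :
    HasDerivAt (fun y : ℝ => ∑ k ∈ range (m+1), y^k / k.factorial)
      (∑ k ∈ range m, x^k / k.factorial) x := by
  induction m with
  | zero => simpa using hasDerivAt_const x (1:ℝ)
  | succ n ih =>
      have hfac : ((n+1).factorial : ℝ) = (n+1) * n.factorial := by
        exact_mod_cast Nat.factorial_succ n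
      have h1 : HasDerivAt (fun y : ℝ => y^(n+1) / (n+1).factorial)
          (x^n / n.factorial) x := by
        have h := (hasDerivAt_pow (n+1) x).div_const ((n+1).factorial : ℝ)
        refine h.congr_deriv ?_
        rw [hfac, show n + 1 - 1 = n by omega]
        push_cast
        have h2 : ((n:ℝ)+1) ≠ 0 := by positivity
        have h3 : (n.factorial : ℝ) ≠ 0 := by positivity
        field_simp
      have := ih.add h1
      simp only [Finset.sum_range_succ] at this ⊢
      exact this

noncomputable def frameB (n : ℕ) (x : ℝ) : ℝ :=
  ∑ k ∈ range (n+1), x^k / k.factorial + 30 * x^(n+1) / (n+1).factorial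

lemma frameB_deriv (n : ℕ) (x : ℝ) :
    HasDerivAt (frameB (n+1)) (frameB n x) x := by
  have hfac : ((n+2).factorial : ℝ) = (n+2) * (n+1).factorial := by
    exact_mod_cast Nat.factorial_succ (n+1)
  have h1 : HasDerivAt (fun y : ℝ => 30 * y^(n+2) / (n+2).factorial)
      (30 * x^(n+1) / (n+1).factorial) x := by
    have h := ((hasDerivAt_pow (n+2) x).const_mul (30:ℝ)).div_const ((n+2).factorial : ℝ)
    refine h.congr_deriv ?_
    rw [hfac, show n + 2 - 1 = n + 1 by omega]
    push_cast
    have h2 : ((n:ℝ)+2) ≠ 0 := by positivity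
    have h3 : ((n+1).factorial : ℝ) ≠ 0 := by positivity
    field_simp
  exact (frame_sum_deriv (n+1) x).add h1

lemma frame_sum_zero (m : ℕ) : ∑ k ∈ range (m+1), (0:ℝ)^k / k.factorial = 1 := by
  induction m with
  | zero => simp
  | succ n ih => rw [Finset.sum_range_succ, ih, zero_pow (Nat.succ_ne_zero n)]; simp

lemma frame_exp5 : Real.exp 5 ≤ 151 := by
  have h1 : Real.exp 1 < 2.7182818286 := Real.exp_one_lt_d9
  have h5 : Real.exp 5 = (Real.exp 1)^5 := by
    rw [← Real.exp_nat_mul]; norm_num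
  have hp : (Real.exp 1)^5 ≤ 2.7182818286^5 := by
    apply pow_le_pow_left₀ (Real.exp_pos 1).le h1.le
  rw [h5]; nlinarith [hp]

lemma frame_exp_upper (n : ℕ) : ∀ x ∈ Set.Icc (0:ℝ) 5, Real.exp x ≤ frameB n x := by
  induction n with
  | zero =>
      intro x hx
      obtain ⟨hx0, hx5⟩ := hx
      have hc := convexOn_exp.2 (Set.mem_univ (0:ℝ)) (Set.mem_univ (5:ℝ))
        (show (0:ℝ) ≤ 1 - x/5 by linarith) (show (0:ℝ) ≤ x/5 by linarith)
        (show (1 - x/5) + x/5 = 1 by ring)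
      simp only [smul_eq_mul, mul_zero, zero_add, mul_one] at hc
      have hx' : (1 - x/5) * 0 + (x/5) * 5 = x := by ring
      rw [Real.exp_zero] at hc
      have h5 := frame_exp5
      have : Real.exp x ≤ (1 - x/5) + x/5 * Real.exp 5 := by
        calc Real.exp x = Real.exp ((1-x/5) * 0 + (x/5) * 5) := by rw [hx']
        _ ≤ _ := by simpa [Real.exp_zero] using hc
      have hB : frameB 0 x = 1 + 30 * x := by simp [frameB]
      rw [hB]
      nlinarith
  | succ n ih =>
      intro x hx
      obtain ⟨hx0, hx5⟩ := hx
      set F : ℝ → ℝ := fun y => frameB (n+1) y - Real.exp y with hF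
      have hderiv : ∀ y : ℝ, HasDerivAt F (frameB n y - Real.exp y) y :=
        fun y => (frameB_deriv n y).sub (Real.hasDerivAt_exp y)
      have hmono : MonotoneOn F (Set.Icc (0:ℝ) 5) := by
        apply monotoneOn_of_deriv_nonneg (convex_Icc 0 5)
        · exact Continuous.continuousOn (by
            have : Continuous (frameB (n+1)) := by
              unfold frameB
              continuity
            exact this.sub Real.continuous_exp)
        · intro y hy
          exact (hderiv y).differentiableAt.differentiableWithinAt
        · intro y hy
          rw [(hderiv y).deriv]
          rw [interior_Icc] at hy
          have := ih y ⟨hy.1.le, hy.2.le⟩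
          linarith
      have h0 : F 0 = 0 := by
        simp [hF, frameB, frame_sum_zero, Real.exp_zero, zero_pow (Nat.succ_ne_zero n)]
      have := hmono (Set.mem_Icc.2 ⟨le_refl 0, by norm_num⟩) (Set.mem_Icc.2 ⟨hx0, hx5⟩) hx0
      rw [h0] at this
      simpa [hF] using le_of_sub_nonneg this


set_option maxHeartbeats 4000000 in
lemma frameS1 (x : ℝ) (h0 : 0 ≤ x) (h5 : x ≤ 5) :
    ((-1:ℝ)/30) + ((-1:ℝ)/30) * x + ((-11:ℝ)/630) * x ^ 2 + ((-2:ℝ)/315) * x ^ 3 + ((-53:ℝ)/30240) * x ^ 4 + ((-19:ℝ)/50400) * x ^ 5 + ((-1:ℝ)/16200) * x ^ 6 + ((-1:ℝ)/151200) * x ^ 7 + ((1003:ℝ)/3113510400) * x ^ 8 + ((751:ℝ)/3353011200) * x ^ 9 + ((61:ℝ)/465696000) * x ^ 10 + ((271:ℝ)/17882726400) * x ^ 11 + ((6521:ℝ)/2092278988800) * x ^ 12 + ((1217:ℝ)/4483454976000) * x ^ 13 + ((73:ℝ)/3362591232000) * x ^ 14 + ((17:ℝ)/4075868160000) * x ^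 15 + ((1:ℝ)/853991424000) * x ^ 16 + ((83:ℝ)/322808758272000) * x ^ 17 + ((19:ℝ)/434550251520000) * x ^ 18 + ((6047:ℝ)/994250975477760000) * x ^ 19 + ((307:ℝ)/426107560919040000) * x ^ 20 + ((30649:ℝ)/38775788043632640000) * x ^ 21 + ((-19:ℝ)/80782891757568000) * x ^ 22 + ((1:ℝ)/43084208937369600) * x ^ 23 < 0 := by
  rcases le_total x (101/32) with hx0 | hx0
  · -- [0.0, 3.15625]
    linarith [
      pow_nonneg (show (0:ℝ) ≤ x - (0) by linarith) 1,
      pow_nonneg (show (0:ℝ) ≤ x - (0) by linarith) 2,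
      pow_nonneg (show (0:ℝ) ≤ x - (0) by linarith) 3,
      pow_nonneg (show (0:ℝ) ≤ x - (0) by linarith) 4,
      pow_nonneg (show (0:ℝ) ≤ x - (0) by linarith) 5,
      pow_nonneg (show (0:ℝ) ≤ x - (0) by linarith) 6,
      pow_nonneg (show (0:ℝ) ≤ x - (0) by linarith) 7,
      pow_le_pow_left₀ (show (0:ℝ) ≤ x - (0) by linarith) (show x - (0) ≤ (101/32) by linarith) 8,
      pow_le_pow_left₀ (show (0:ℝ) ≤ x - (0) by linarith) (show x - (0) ≤ (101/32) by linarith) 9,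
      pow_le_pow_left₀ (show (0:ℝ) ≤ x - (0) by linarith) (show x - (0) ≤ (101/32) by linarith) 10,
      pow_le_pow_left₀ (show (0:ℝ) ≤ x - (0) by linarith) (show x - (0) ≤ (101/32) by linarith) 11,
      pow_le_pow_left₀ (show (0:ℝ) ≤ x - (0) by linarith) (show x - (0) ≤ (101/32) by linarith) 12,
      pow_le_pow_left₀ (show (0:ℝ) ≤ x - (0) by linarith) (show x - (0) ≤ (101/32) by linarith) 13,
      pow_le_pow_left₀ (show (0:ℝ) ≤ x - (0) by linarith) (show x - (0) ≤ (101/32) by linarith) 14,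
      pow_le_pow_left₀ (show (0:ℝ) ≤ x - (0) by linarith) (show x - (0) ≤ (101/32) by linarith) 15,
      pow_le_pow_left₀ (show (0:ℝ) ≤ x - (0) by linarith) (show x - (0) ≤ (101/32) by linarith) 16,
      pow_le_pow_left₀ (show (0:ℝ) ≤ x - (0) by linarith) (show x - (0) ≤ (101/32) by linarith) 17,
      pow_le_pow_left₀ (show (0:ℝ) ≤ x - (0) by linarith) (show x - (0) ≤ (101/32) by linarith) 18,
      pow_le_pow_left₀ (show (0:ℝ) ≤ x - (0) by linarith) (show x - (0) ≤ (101/32) by linarith) 19,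
      pow_le_pow_left₀ (show (0:ℝ) ≤ x - (0) by linarith) (show x - (0) ≤ (101/32) by linarith) 20,
      pow_le_pow_left₀ (show (0:ℝ) ≤ x - (0) by linarith) (show x - (0) ≤ (101/32) by linarith) 21,
      pow_nonneg (show (0:ℝ) ≤ x - (0) by linarith) 22,
      pow_le_pow_left₀ (show (0:ℝ) ≤ x - (0) by linarith) (show x - (0) ≤ (101/32) by linarith) 23]
  rcases le_total x (37/8) with hx1 | hx1
  · -- [3.15625, 4.625]
    linarith [
      pow_nonneg (show (0:ℝ) ≤ x - (101/32) by linarith) 1,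
      pow_nonneg (show (0:ℝ) ≤ x - (101/32) by linarith) 2,
      pow_le_pow_left₀ (show (0:ℝ) ≤ x - (101/32) by linarith) (show x - (101/32) ≤ (47/32) by linarith) 3,
      pow_le_pow_left₀ (show (0:ℝ) ≤ x - (101/32) by linarith) (show x - (101/32) ≤ (47/32) by linarith) 4,
      pow_le_pow_left₀ (show (0:ℝ) ≤ x - (101/32) by linarith) (show x - (101/32) ≤ (47/32) by linarith) 5,
      pow_le_pow_left₀ (show (0:ℝ) ≤ x - (101/32) by linarith) (show x - (101/32) ≤ (47/32) by linarith) 6,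
      pow_le_pow_left₀ (show (0:ℝ) ≤ x - (101/32) by linarith) (show x - (101/32) ≤ (47/32) by linarith) 7,
      pow_le_pow_left₀ (show (0:ℝ) ≤ x - (101/32) by linarith) (show x - (101/32) ≤ (47/32) by linarith) 8,
      pow_le_pow_left₀ (show (0:ℝ) ≤ x - (101/32) by linarith) (show x - (101/32) ≤ (47/32) by linarith) 9,
      pow_le_pow_left₀ (show (0:ℝ) ≤ x - (101/32) by linarith) (show x - (101/32) ≤ (47/32) by linarith) 10,
      pow_le_pow_left₀ (show (0:ℝ) ≤ x - (101/32) by linarith) (show x - (101/32) ≤ (47/32) by linarith) 11,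
      pow_le_pow_left₀ (show (0:ℝ) ≤ x - (101/32) by linarith) (show x - (101/32) ≤ (47/32) by linarith) 12,
      pow_le_pow_left₀ (show (0:ℝ) ≤ x - (101/32) by linarith) (show x - (101/32) ≤ (47/32) by linarith) 13,
      pow_le_pow_left₀ (show (0:ℝ) ≤ x - (101/32) by linarith) (show x - (101/32) ≤ (47/32) by linarith) 14,
      pow_le_pow_left₀ (show (0:ℝ) ≤ x - (101/32) by linarith) (show x - (101/32) ≤ (47/32) by linarith) 15,
      pow_le_pow_left₀ (show (0:ℝ) ≤ x - (101/32) by linarith) (show x - (101/32) ≤ (47/32) by linarith) 16,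
      pow_le_pow_left₀ (show (0:ℝ) ≤ x - (101/32) by linarith) (show x - (101/32) ≤ (47/32) by linarith) 17,
      pow_le_pow_left₀ (show (0:ℝ) ≤ x - (101/32) by linarith) (show x - (101/32) ≤ (47/32) by linarith) 18,
      pow_le_pow_left₀ (show (0:ℝ) ≤ x - (101/32) by linarith) (show x - (101/32) ≤ (47/32) by linarith) 19,
      pow_le_pow_left₀ (show (0:ℝ) ≤ x - (101/32) by linarith) (show x - (101/32) ≤ (47/32) by linarith) 20,
      pow_le_pow_left₀ (show (0:ℝ) ≤ x - (101/32) by linarith) (show x - (101/32) ≤ (47/32) by linarith) 21,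
      pow_le_pow_left₀ (show (0:ℝ) ≤ x - (101/32) by linarith) (show x - (101/32) ≤ (47/32) by linarith) 22,
      pow_le_pow_left₀ (show (0:ℝ) ≤ x - (101/32) by linarith) (show x - (101/32) ≤ (47/32) by linarith) 23]
  -- [4.625, 5.015625]
  linarith [
    pow_le_pow_left₀ (show (0:ℝ) ≤ x - (37/8) by linarith) (show x - (37/8) ≤ (25/64) by linarith) 1,
    pow_le_pow_left₀ (show (0:ℝ) ≤ x - (37/8) by linarith) (show x - (37/8) ≤ (25/64) by linarith) 2,
    pow_le_pow_left₀ (show (0:ℝ) ≤ x - (37/8) by linarith) (show x - (37/8) ≤ (25/64) by linarith) 3,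
    pow_le_pow_left₀ (show (0:ℝ) ≤ x - (37/8) by linarith) (show x - (37/8) ≤ (25/64) by linarith) 4,
    pow_le_pow_left₀ (show (0:ℝ) ≤ x - (37/8) by linarith) (show x - (37/8) ≤ (25/64) by linarith) 5,
    pow_le_pow_left₀ (show (0:ℝ) ≤ x - (37/8) by linarith) (show x - (37/8) ≤ (25/64) by linarith) 6,
    pow_le_pow_left₀ (show (0:ℝ) ≤ x - (37/8) by linarith) (show x - (37/8) ≤ (25/64) by linarith) 7,
    pow_le_pow_left₀ (show (0:ℝ) ≤ x - (37/8) by linarith) (show x - (37/8) ≤ (25/64) by linarith) 8,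
    pow_le_pow_left₀ (show (0:ℝ) ≤ x - (37/8) by linarith) (show x - (37/8) ≤ (25/64) by linarith) 9,
    pow_le_pow_left₀ (show (0:ℝ) ≤ x - (37/8) by linarith) (show x - (37/8) ≤ (25/64) by linarith) 10,
    pow_le_pow_left₀ (show (0:ℝ) ≤ x - (37/8) by linarith) (show x - (37/8) ≤ (25/64) by linarith) 11,
    pow_le_pow_left₀ (show (0:ℝ) ≤ x - (37/8) by linarith) (show x - (37/8) ≤ (25/64) by linarith) 12,
    pow_le_pow_left₀ (show (0:ℝ) ≤ x - (37/8) by linarith) (show x - (37/8) ≤ (25/64) by linarith) 13,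
    pow_le_pow_left₀ (show (0:ℝ) ≤ x - (37/8) by linarith) (show x - (37/8) ≤ (25/64) by linarith) 14,
    pow_le_pow_left₀ (show (0:ℝ) ≤ x - (37/8) by linarith) (show x - (37/8) ≤ (25/64) by linarith) 15,
    pow_le_pow_left₀ (show (0:ℝ) ≤ x - (37/8) by linarith) (show x - (37/8) ≤ (25/64) by linarith) 16,
    pow_le_pow_left₀ (show (0:ℝ) ≤ x - (37/8) by linarith) (show x - (37/8) ≤ (25/64) by linarith) 17,
    pow_le_pow_left₀ (show (0:ℝ) ≤ x - (37/8) by linarith) (show x - (37/8) ≤ (25/64) by linarith) 18,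
    pow_le_pow_left₀ (show (0:ℝ) ≤ x - (37/8) by linarith) (show x - (37/8) ≤ (25/64) by linarith) 19,
    pow_le_pow_left₀ (show (0:ℝ) ≤ x - (37/8) by linarith) (show x - (37/8) ≤ (25/64) by linarith) 20,
    pow_le_pow_left₀ (show (0:ℝ) ≤ x - (37/8) by linarith) (show x - (37/8) ≤ (25/64) by linarith) 21,
    pow_le_pow_left₀ (show (0:ℝ) ≤ x - (37/8) by linarith) (show x - (37/8) ≤ (25/64) by linarith) 22,
    pow_le_pow_left₀ (show (0:ℝ) ≤ x - (37/8) by linarith) (show x - (37/8) ≤ (25/64) by linarith) 23]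

lemma frameS2 (x : ℝ) (h0 : 0 ≤ x) (h5 : x ≤ 5) :
    ((1:ℝ)/1260) + ((1:ℝ)/1260) * x + ((1:ℝ)/3360) * x ^ 2 + ((11:ℝ)/60480) * x ^ 3 + ((1:ℝ)/30240) * x ^ 4 + ((19:ℝ)/1209600) * x ^ 5 + ((1:ℝ)/259200) * x ^ 6 + ((23:ℝ)/25401600) * x ^ 7 + ((1:ℝ)/5644800) * x ^ 8 + ((23:ℝ)/812851200) * x ^ 9 + ((1:ℝ)/270950400) * x ^ 10 + ((1:ℝ)/1625702400) * x ^ 11 > 0 := by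
  -- [0.0, 5.0]
  linarith [
    pow_nonneg (show (0:ℝ) ≤ x - (0) by linarith) 1,
    pow_nonneg (show (0:ℝ) ≤ x - (0) by linarith) 2,
    pow_nonneg (show (0:ℝ) ≤ x - (0) by linarith) 3,
    pow_nonneg (show (0:ℝ) ≤ x - (0) by linarith) 4,
    pow_nonneg (show (0:ℝ) ≤ x - (0) by linarith) 5,
    pow_nonneg (show (0:ℝ) ≤ x - (0) by linarith) 6,
    pow_nonneg (show (0:ℝ) ≤ x - (0) by linarith) 7,
    pow_nonneg (show (0:ℝ) ≤ x - (0) by linarith) 8,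
    pow_nonneg (show (0:ℝ) ≤ x - (0) by linarith) 9,
    pow_nonneg (show (0:ℝ) ≤ x - (0) by linarith) 10,
    pow_nonneg (show (0:ℝ) ≤ x - (0) by linarith) 11]

lemma frameP2 (x : ℝ) (h0 : 0 ≤ x) (h5 : x ≤ 5) :
    (60) + (12) * x ^ 2 + ((1:ℝ)/6) * x ^ 4 + ((1:ℝ)/1260) * x ^ 7 + ((1:ℝ)/3360) * x ^ 8 + ((-1:ℝ)/10080) * x ^ 9 + ((1:ℝ)/20160) * x ^ 10 > 0 := by
  rcases le_total x (35/8) with hx0 | hx0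
  · -- [0.0, 4.375]
    linarith [
      pow_nonneg (show (0:ℝ) ≤ x - (0) by linarith) 2,
      pow_nonneg (show (0:ℝ) ≤ x - (0) by linarith) 4,
      pow_nonneg (show (0:ℝ) ≤ x - (0) by linarith) 7,
      pow_nonneg (show (0:ℝ) ≤ x - (0) by linarith) 8,
      pow_le_pow_left₀ (show (0:ℝ) ≤ x - (0) by linarith) (show x - (0) ≤ (35/8) by linarith) 9,
      pow_nonneg (show (0:ℝ) ≤ x - (0) by linarith) 10]
  -- [4.375, 5.015625]
  linarith [
    pow_nonneg (show (0:ℝ) ≤ x - (35/8) by linarith) 1,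
    pow_nonneg (show (0:ℝ) ≤ x - (35/8) by linarith) 2,
    pow_nonneg (show (0:ℝ) ≤ x - (35/8) by linarith) 3,
    pow_nonneg (show (0:ℝ) ≤ x - (35/8) by linarith) 4,
    pow_nonneg (show (0:ℝ) ≤ x - (35/8) by linarith) 5,
    pow_nonneg (show (0:ℝ) ≤ x - (35/8) by linarith) 6,
    pow_nonneg (show (0:ℝ) ≤ x - (35/8) by linarith) 7,
    pow_nonneg (show (0:ℝ) ≤ x - (35/8) by linarith) 8,
    pow_nonneg (show (0:ℝ) ≤ x - (35/8) by linarith) 9,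
    pow_nonneg (show (0:ℝ) ≤ x - (35/8) by linarith) 10]

lemma frameP3 (x : ℝ) (h0 : 0 ≤ x) (h5 : x ≤ 5) :
    (66) + (13) * x ^ 2 + ((1:ℝ)/12) * x ^ 4 + ((-1:ℝ)/30) * x ^ 5 + ((-1:ℝ)/120) * x ^ 6 + ((-1:ℝ)/1260) * x ^ 7 + ((1:ℝ)/20160) * x ^ 8 + ((-1:ℝ)/17280) * x ^ 9 + ((103:ℝ)/3628800) * x ^ 10 + ((1:ℝ)/1814400) * x ^ 11 + ((1:ℝ)/14515200) * x ^ 12 + ((1003:ℝ)/6227020800) * x ^ 13 + ((-317:ℝ)/6227020800) * x ^ 14 + ((1:ℝ)/207567360) * x ^ 15 > 0 := by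
  rcases le_total x (59/16) with hx0 | hx0
  · -- [0.0, 3.6875]
    linarith [
      pow_nonneg (show (0:ℝ) ≤ x - (0) by linarith) 2,
      pow_nonneg (show (0:ℝ) ≤ x - (0) by linarith) 4,
      pow_le_pow_left₀ (show (0:ℝ) ≤ x - (0) by linarith) (show x - (0) ≤ (59/16) by linarith) 5,
      pow_le_pow_left₀ (show (0:ℝ) ≤ x - (0) by linarith) (show x - (0) ≤ (59/16) by linarith) 6,
      pow_le_pow_left₀ (show (0:ℝ) ≤ x - (0) by linarith) (show x - (0) ≤ (59/16) by linarith) 7,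
      pow_nonneg (show (0:ℝ) ≤ x - (0) by linarith) 8,
      pow_le_pow_left₀ (show (0:ℝ) ≤ x - (0) by linarith) (show x - (0) ≤ (59/16) by linarith) 9,
      pow_nonneg (show (0:ℝ) ≤ x - (0) by linarith) 10,
      pow_nonneg (show (0:ℝ) ≤ x - (0) by linarith) 11,
      pow_nonneg (show (0:ℝ) ≤ x - (0) by linarith) 12,
      pow_nonneg (show (0:ℝ) ≤ x - (0) by linarith) 13,
      pow_le_pow_left₀ (show (0:ℝ) ≤ x - (0) by linarith) (show x - (0) ≤ (59/16) by linarith) 14,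
      pow_nonneg (show (0:ℝ) ≤ x - (0) by linarith) 15]
  -- [3.6875, 5.015625]
  linarith [
    pow_nonneg (show (0:ℝ) ≤ x - (59/16) by linarith) 1,
    pow_nonneg (show (0:ℝ) ≤ x - (59/16) by linarith) 2,
    pow_nonneg (show (0:ℝ) ≤ x - (59/16) by linarith) 3,
    pow_nonneg (show (0:ℝ) ≤ x - (59/16) by linarith) 4,
    pow_nonneg (show (0:ℝ) ≤ x - (59/16) by linarith) 5,
    pow_nonneg (show (0:ℝ) ≤ x - (59/16) by linarith) 6,
    pow_nonneg (show (0:ℝ) ≤ x - (59/16) by linarith) 7,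
    pow_nonneg (show (0:ℝ) ≤ x - (59/16) by linarith) 8,
    pow_nonneg (show (0:ℝ) ≤ x - (59/16) by linarith) 9,
    pow_nonneg (show (0:ℝ) ≤ x - (59/16) by linarith) 10,
    pow_nonneg (show (0:ℝ) ≤ x - (59/16) by linarith) 11,
    pow_nonneg (show (0:ℝ) ≤ x - (59/16) by linarith) 12,
    pow_nonneg (show (0:ℝ) ≤ x - (59/16) by linarith) 13,
    pow_nonneg (show (0:ℝ) ≤ x - (59/16) by linarith) 14,
    pow_nonneg (show (0:ℝ) ≤ x - (59/16) by linarith) 15]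


set_option maxHeartbeats 4000000 in
theorem frame_inequality (x : ℝ) (hx0 : 0 < x) (hx5 : x < 5) :
    (3 + x^2/11) * Real.sinh x / (2 + Real.cosh x + x^2/11) < x ∧
    x < (3 + x^2/10) * Real.sinh x / (2 + Real.cosh x + x^2/10) := by
  have hu : 0 < Real.exp x := Real.exp_pos x
  have hune : Real.exp x ≠ 0 := hu.ne'
  have hU : Real.exp x ≤ (1) + (1) * x + ((1:ℝ)/2) * x ^ 2 + ((1:ℝ)/6) * x ^ 3 + ((1:ℝ)/24) * x ^ 4 + ((1:ℝ)/120) * x ^ 5 + ((1:ℝ)/720) * x ^ 6 + ((1:ℝ)/5040) * x ^ 7 + ((1:ℝ)/40320) * x ^ 8 + ((1:ℝ)/362880) * x ^ 9 + ((1:ℝ)/3628800) * x ^ 10 + ((1:ℝ)/39916800) * x ^ 11 + ((1:ℝ)/479001600) * x ^ 12 + ((1:ℝ)/207567360) * x ^ 13 := by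
    have h := frame_exp_upper 12 x ⟨hx0.le, hx5.le⟩
    simp only [frameB, Finset.sum_range_succ, Finset.sum_range_zero] at h
    norm_num [Nat.factorial] at h
    linarith
  have hL : (1) + (1) * x + ((1:ℝ)/2) * x ^ 2 + ((1:ℝ)/6) * x ^ 3 + ((1:ℝ)/24) * x ^ 4 + ((1:ℝ)/120) * x ^ 5 + ((1:ℝ)/720) * x ^ 6 + ((1:ℝ)/5040) * x ^ 7 + ((1:ℝ)/40320) * x ^ 8 ≤ Real.exp x := by
    have h := Real.sum_le_exp_of_nonneg hx0.le 9
    simp only [Finset.sum_range_succ, Finset.sum_range_zero] at h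
    norm_num [Nat.factorial] at h
    linarith
  have hA1 : (0:ℝ) < x^2 - 11*x + 33 := by nlinarith [sq_nonneg (2*x - 11)]
  have hA2 : (0:ℝ) < x^2 - 10*x + 30 := by nlinarith [sq_nonneg (x - 5)]
  have hQ1 : (x^2-11*x+33)*(Real.exp x)^2 - (44*x+2*x^3)*(Real.exp x) - (x^2+11*x+33) < 0 := by
    have hS1 := frameS1 x hx0.le hx5.le
    have hRU : (x^2-11*x+33)*((1) + (1) * x + ((1:ℝ)/2) * x ^ 2 + ((1:ℝ)/6) * x ^ 3 + ((1:ℝ)/24) * x ^ 4 + ((1:ℝ)/120) * x ^ 5 + ((1:ℝ)/720) * x ^ 6 + ((1:ℝ)/5040) * x ^ 7 + ((1:ℝ)/40320) * x ^ 8 + ((1:ℝ)/362880) * x ^ 9 + ((1:ℝ)/3628800) * x ^ 10 + ((1:ℝ)/39916800) * x ^ 11 + ((1:ℝ)/479001600) * x ^ 12 + ((1:ℝ)/207567360) * x ^ 13)^2 - (44*x+2*x^3)*((1) + (1) * x + ((1:ℝ)/2) * x ^ 2 + ((1:ℝ)/6) * x ^ 3 + ((1:ℝ)/24) * x ^ 4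 + ((1:ℝ)/120) * x ^ 5 + ((1:ℝ)/720) * x ^ 6 + ((1:ℝ)/5040) * x ^ 7 + ((1:ℝ)/40320) * x ^ 8 + ((1:ℝ)/362880) * x ^ 9 + ((1:ℝ)/3628800) * x ^ 10 + ((1:ℝ)/39916800) * x ^ 11 + ((1:ℝ)/479001600) * x ^ 12 + ((1:ℝ)/207567360) * x ^ 13) - (x^2+11*x+33) < 0 := by
      have hfac : (x^2-11*x+33)*((1) + (1) * x + ((1:ℝ)/2) * x ^ 2 + ((1:ℝ)/6) * x ^ 3 + ((1:ℝ)/24) * x ^ 4 + ((1:ℝ)/120) * x ^ 5 + ((1:ℝ)/720) * x ^ 6 + ((1:ℝ)/5040) * x ^ 7 + ((1:ℝ)/40320) * x ^ 8 + ((1:ℝ)/362880) * x ^ 9 + ((1:ℝ)/3628800) * x ^ 10 + ((1:ℝ)/39916800) * x ^ 11 + ((1:ℝ)/479001600) * x ^ 12 + ((1:ℝ)/207567360) * x ^ 13)^2 - (44*x+2*x^3)*((1) + (1) * x + ((1:ℝ)/2) * x ^ 2 + ((1:ℝ)/6) * x ^ 3 + ((1:ℝ)/24) * x ^ 4 + ((1:ℝ)/120)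 * x ^ 5 + ((1:ℝ)/720) * x ^ 6 + ((1:ℝ)/5040) * x ^ 7 + ((1:ℝ)/40320) * x ^ 8 + ((1:ℝ)/362880) * x ^ 9 + ((1:ℝ)/3628800) * x ^ 10 + ((1:ℝ)/39916800) * x ^ 11 + ((1:ℝ)/479001600) * x ^ 12 + ((1:ℝ)/207567360) * x ^ 13) - (x^2+11*x+33)
          = x^5 * (((-1:ℝ)/30) + ((-1:ℝ)/30) * x + ((-11:ℝ)/630) * x ^ 2 + ((-2:ℝ)/315) * x ^ 3 + ((-53:ℝ)/30240) * x ^ 4 + ((-19:ℝ)/50400) * x ^ 5 + ((-1:ℝ)/16200) * x ^ 6 + ((-1:ℝ)/151200) * x ^ 7 + ((1003:ℝ)/3113510400) * x ^ 8 + ((751:ℝ)/3353011200) * x ^ 9 + ((61:ℝ)/465696000) * x ^ 10 + ((271:ℝ)/17882726400) * x ^ 11 + ((6521:ℝ)/2092278988800) * x ^ 12 + ((1217:ℝ)/4483454976000) * x ^ 13 + ((73:ℝ)/3362591232000) * x ^ 14 + ((17:ℝ)/4075868160000) * x ^ 15 + ((1:ℝ)/853991424000) * x ^ 16 + ((83:ℝ)/322808758272000)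 * x ^ 17 + ((19:ℝ)/434550251520000) * x ^ 18 + ((6047:ℝ)/994250975477760000) * x ^ 19 + ((307:ℝ)/426107560919040000) * x ^ 20 + ((30649:ℝ)/38775788043632640000) * x ^ 21 + ((-19:ℝ)/80782891757568000) * x ^ 22 + ((1:ℝ)/43084208937369600) * x ^ 23) := by ring
      rw [hfac]
      exact mul_neg_of_pos_of_neg (pow_pos hx0 5) hS1
    have hP3 := frameP3 x hx0.le hx5.le
    nlinarith [mul_nonneg (sub_nonneg.2 hU) hP3.le,
               mul_nonneg (mul_nonneg hA1.le (sub_nonneg.2 hU)) (sub_nonneg.2 hL)]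
  have hQ2 : 0 < (x^2-10*x+30)*(Real.exp x)^2 - (40*x+2*x^3)*(Real.exp x) - (x^2+10*x+30) := by
    have hS2 := frameS2 x hx0.le hx5.le
    have hRL : 0 < (x^2-10*x+30)*((1) + (1) * x + ((1:ℝ)/2) * x ^ 2 + ((1:ℝ)/6) * x ^ 3 + ((1:ℝ)/24) * x ^ 4 + ((1:ℝ)/120) * x ^ 5 + ((1:ℝ)/720) * x ^ 6 + ((1:ℝ)/5040) * x ^ 7 + ((1:ℝ)/40320) * x ^ 8)^2 - (40*x+2*x^3)*((1) + (1) * x + ((1:ℝ)/2) * x ^ 2 + ((1:ℝ)/6) * x ^ 3 + ((1:ℝ)/24) * x ^ 4 + ((1:ℝ)/120) * x ^ 5 + ((1:ℝ)/720) * x ^ 6 + ((1:ℝ)/5040) * x ^ 7 + ((1:ℝ)/40320) * x ^ 8) - (x^2+10*x+30) := by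
      have hfac : (x^2-10*x+30)*((1) + (1) * x + ((1:ℝ)/2) * x ^ 2 + ((1:ℝ)/6) * x ^ 3 + ((1:ℝ)/24) * x ^ 4 + ((1:ℝ)/120) * x ^ 5 + ((1:ℝ)/720) * x ^ 6 + ((1:ℝ)/5040) * x ^ 7 + ((1:ℝ)/40320) * x ^ 8)^2 - (40*x+2*x^3)*((1) + (1) * x + ((1:ℝ)/2) * x ^ 2 + ((1:ℝ)/6) * x ^ 3 + ((1:ℝ)/24) * x ^ 4 + ((1:ℝ)/120) * x ^ 5 + ((1:ℝ)/720) * x ^ 6 + ((1:ℝ)/5040) * x ^ 7 + ((1:ℝ)/40320) * x ^ 8) - (x^2+10*x+30)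
          = x^7 * (((1:ℝ)/1260) + ((1:ℝ)/1260) * x + ((1:ℝ)/3360) * x ^ 2 + ((11:ℝ)/60480) * x ^ 3 + ((1:ℝ)/30240) * x ^ 4 + ((19:ℝ)/1209600) * x ^ 5 + ((1:ℝ)/259200) * x ^ 6 + ((23:ℝ)/25401600) * x ^ 7 + ((1:ℝ)/5644800) * x ^ 8 + ((23:ℝ)/812851200) * x ^ 9 + ((1:ℝ)/270950400) * x ^ 10 + ((1:ℝ)/1625702400) * x ^ 11) := by ring
      rw [hfac]
      exact mul_pos (pow_pos hx0 7) hS2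
    have hP2 := frameP2 x hx0.le hx5.le
    nlinarith [mul_nonneg (sub_nonneg.2 hL) hP2.le,
               mul_nonneg (mul_nonneg hA2.le (sub_nonneg.2 hL)) (sub_nonneg.2 hL)]
  have hcosh := Real.cosh_pos x
  have hD1 : (0:ℝ) < 2 + Real.cosh x + x^2/11 := by positivity
  have hD2 : (0:ℝ) < 2 + Real.cosh x + x^2/10 := by positivity
  constructor
  · rw [div_lt_iff₀ hD1]
    have key : (3 + x^2/11) * Real.sinh x - x * (2 + Real.cosh x + x^2/11)
        = ((x^2-11*x+33)*(Real.exp x)^2 - (44*x+2*x^3)*(Real.exp x) - (x^2+11*x+33)) / (22 * Real.exp x) := by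
      rw [Real.sinh_eq, Real.cosh_eq, Real.exp_neg]
      field_simp
      ring
    have h2 := div_neg_of_neg_of_pos hQ1 (by positivity : (0:ℝ) < 22 * Real.exp x)
    rw [← key] at h2
    linarith
  · rw [lt_div_iff₀ hD2]
    have key : (3 + x^2/10) * Real.sinh x - x * (2 + Real.cosh x + x^2/10)
        = ((x^2-10*x+30)*(Real.exp x)^2 - (40*x+2*x^3)*(Real.exp x) - (x^2+10*x+30)) / (20 * Real.exp x) := by
      rw [Real.sinh_eq, Real.cosh_eq, Real.exp_neg]
      field_simp
      ring
    have h2 := div_pos hQ2 (by positivity : (0:ℝ) < 20 * Real.exp x)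
    rw [← key] at h2
    linarith
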